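/- Let H be a finite simple graph that is a subdivision of K_4 (each edge of K_4 is replaced by a path of length at least 1, internally disjoint from the other paths), and suppose H is not bipartite. Then every orientation of H contains an inconsistent odd cycle, i.e., a cycle of odd length in the underlying undirected graph whose edges do not all point consistently around the cycle (so it is not a directed cycle). -/

import Mathlib

/-- `E` is an orientation of the simple graph `H`: every edge of `H` gets exactly one
direction, and `E` only uses edges of `H`. -/
def IsOrientation {V : Type*} (H : SimpleGraph V) (E : V → V → Prop) : Prop :=
  (∀ u v, H.Adj u v ↔ (E u v ∨ E v u)) ∧ (∀ u v, ¬ (E u v ∧ E v u))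

/-- `H` is a subdivision of `K₄`: there are four distinct branch vertices `b 0, …, b 3`
and, for each pair of branch vertices, a path of `H` (of length at least 1) joining
them, such that branch vertices occur on a path only as its endpoints, two distinct
paths meet only in branch vertices (so the paths are internally disjoint), and every
vertex and every edge of `H` lies on one of the six paths. -/
def IsK4Subdivision {V : Type*} (H : SimpleGraph V) : Prop :=
  ∃ (b : Fin 4 → V) (p : ∀ i j : Fin 4, i < j → H.Walk (b i) (b j)),
    Function.Injective b ∧
    (∀ i j (h : i < j), (p i j h).IsPath) ∧
    (∀ i j (h : i < j) (k : Fin 4), b k ∈ (p i j h).support → k = i ∨ k = j) ∧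
    (∀ i j (h : i < j) (i' j' : Fin 4) (h' : i' < j'), (i, j) ≠ (i', j') →
      ∀ v, v ∈ (p i j h).support → v ∈ (p i' j' h').support → ∃ k, v = b k) ∧
    (∀ v : V, ∃ (i j : Fin 4) (h : i < j), v ∈ (p i j h).support) ∧
    (∀ e ∈ H.edgeSet, ∃ (i j : Fin 4) (h : i < j), e ∈ (p i j h).edges)


open SimpleGraph Walk


def eidx : Fin 4 → Fin 4 → Fin 6 := fun i j =>
  if (i = 0 ∧ j = 1) ∨ (i = 1 ∧ j = 0) then 0
  else if (i = 0 ∧ j = 2) ∨ (i = 2 ∧ j = 0) then 1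
  else if (i = 0 ∧ j = 3) ∨ (i = 3 ∧ j = 0) then 2
  else if (i = 1 ∧ j = 2) ∨ (i = 2 ∧ j = 1) then 3
  else if (i = 1 ∧ j = 3) ∨ (i = 3 ∧ j = 1) then 4
  else 5

def triB (x : Fin 6 → Bool) (k a c : Fin 4) : Bool :=
  x (eidx k a) ^^ (x (eidx a c) ^^ x (eidx c k))

def quadB (x : Fin 6 → Bool) (k a m c : Fin 4) : Bool :=
  x (eidx k a) ^^ (x (eidx a m) ^^ (x (eidx m c) ^^ x (eidx c k)))

set_option maxHeartbeats 2000000 in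
lemma selectB : ∀ x : Fin 6 → Bool,
    (∃ i j k : Fin 4, i ≠ j ∧ j ≠ k ∧ i ≠ k ∧ triB x i j k = true) →
    ∃ k i j l : Fin 4, k ≠ i ∧ k ≠ j ∧ k ≠ l ∧ i ≠ j ∧ i ≠ l ∧ j ≠ l ∧
      (triB x k i j = true ∨ quadB x k i l j = true) ∧
      (triB x k j l = true ∨ quadB x k j i l = true) ∧
      (triB x k l i = true ∨ quadB x k l j i = true) := by
  decide

lemma xor2 (m n : ℕ) : (decide (Odd m) ^^ decide (Odd n)) = decide (Odd (m + n)) := by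
  simp only [Nat.odd_iff]
  have hmn : (m + n) % 2 = (m % 2 + n % 2) % 2 := Nat.add_mod m n 2
  rcases Nat.mod_two_eq_zero_or_one m with hm | hm <;>
    rcases Nat.mod_two_eq_zero_or_one n with hn | hn <;>
    simp [hm, hn, hmn]

section Aux
variable {V : Type*} {H : SimpleGraph V}

lemma loop_path_nil {a : V} {P : H.Walk a a} (hP : P.IsPath) : P.length = 0 := by
  cases P with
  | nil => rfl
  | cons h q => exact absurd q.end_mem_support (Walk.cons_isPath_iff .. |>.mp hP).2

lemma not_ends_edge {a b : V} {P : H.Walk a b} (hP : P.IsPath) (hab : a ≠ b)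
    (hlen : P.length ≠ 1) : s(a, b) ∉ P.edges := by
  cases P with
  | nil => simp
  | @cons u x v h q =>
    rw [Walk.edges_cons, List.mem_cons]
    rw [Walk.cons_isPath_iff] at hP
    rintro (he | he)
    · rw [Sym2.eq_iff] at he
      rcases he with ⟨-, hvx⟩ | ⟨hux, hvu⟩
      · subst hvx
        exact hlen (by simp [loop_path_nil hP.1])
      · exact hab hvu.symm
    · exact hP.2 (Walk.fst_mem_support_of_mem_edges q he)

lemma isPath_append' {a b c : V} {P : H.Walk a b} {Q : H.Walk b c}
    (hP : P.IsPath) (hQ : Q.IsPath)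
    (hint : ∀ v, v ∈ P.support → v ∈ Q.support → v = b) : (P.append Q).IsPath := by
  rw [Walk.isPath_def, Walk.support_append]
  refine List.Nodup.append hP.support_nodup ?_ ?_
  · have := hQ.support_nodup
    rw [Walk.support_eq_cons] at this
    exact (List.nodup_cons.mp this).2
  · intro v hv hv'
    have hb := hint v hv (List.mem_of_mem_tail hv')
    subst hb
    have := hQ.support_nodup
    rw [Walk.support_eq_cons] at this
    exact (List.nodup_cons.mp this).1 hv'

lemma isCycle_append' {a b : V} {P : H.Walk a b} {Q : H.Walk b a}
    (hab : a ≠ b) (hP : P.IsPath) (hQ : Q.IsPath) (hQ2 : Q.length ≠ 1)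
    (hint : ∀ v, v ∈ P.support → v ∈ Q.support → v = a ∨ v = b) :
    (P.append Q).IsCycle := by
  rw [Walk.isCycle_def]
  refine ⟨?_, ?_, ?_⟩
  · rw [Walk.isTrail_def, Walk.edges_append]
    refine List.Nodup.append hP.isTrail.edges_nodup hQ.isTrail.edges_nodup ?_
    intro e heP heQ
    induction e with
    | _ u v =>
      have huv : u ≠ v := (Walk.adj_of_mem_edges P heP).ne
      have hu : u = a ∨ u = b :=
        hint u (Walk.fst_mem_support_of_mem_edges P heP)
          (Walk.fst_mem_support_of_mem_edges Q heQ)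
      have hv : v = a ∨ v = b :=
        hint v (Walk.snd_mem_support_of_mem_edges P heP)
          (Walk.snd_mem_support_of_mem_edges Q heQ)
      have : s(b, a) ∈ Q.edges := by
        rcases hu with rfl | rfl <;> rcases hv with rfl | rfl
        · exact absurd rfl huv
        · rwa [Sym2.eq_swap] at heQ
        · exact heQ
        · exact absurd rfl huv
      exact not_ends_edge hQ hab.symm hQ2 this
  · intro hnil
    have : (P.append Q).length = 0 := by rw [hnil]; rfl
    rw [Walk.length_append] at this
    exact hab (Walk.eq_of_length_eq_zero (p := P) (by omega))
  · rw [Walk.tail_support_append]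
    have hPn := hP.support_nodup
    rw [Walk.support_eq_cons] at hPn
    have hQn := hQ.support_nodup
    rw [Walk.support_eq_cons] at hQn
    refine List.Nodup.append (List.nodup_cons.mp hPn).2 (List.nodup_cons.mp hQn).2 ?_
    intro v hv hv'
    rcases hint v (List.mem_of_mem_tail hv) (List.mem_of_mem_tail hv') with rfl | rfl
    · exact (List.nodup_cons.mp hPn).1 hv
    · exact (List.nodup_cons.mp hQn).1 hv'


lemma getVert_injOn' {u v : V} {p : H.Walk u v} (hp : p.IsPath) :
    ∀ {s t : ℕ}, s ≤ p.length → t ≤ p.length → p.getVert s = p.getVert t → s = t := by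
  induction p with
  | nil => intro s t hs ht _; simp only [Walk.length_nil, Nat.le_zero] at hs ht; omega
  | @cons a x c h q ih =>
    intro s t hs ht hst
    rw [Walk.cons_isPath_iff] at hp
    match s, t with
    | 0, 0 => rfl
    | 0, (t+1) =>
      exfalso
      rw [Walk.getVert_zero, Walk.getVert_cons_succ] at hst
      exact hp.2 (Walk.mem_support_iff_exists_getVert.mpr ⟨t, hst.symm, by simpa using ht⟩)
    | (s+1), 0 =>
      exfalso
      rw [Walk.getVert_zero, Walk.getVert_cons_succ] at hst
      exact hp.2 (Walk.mem_support_iff_exists_getVert.mpr ⟨s, hst, by simpa using hs⟩)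
    | (s+1), (t+1) =>
      rw [Walk.getVert_cons_succ, Walk.getVert_cons_succ] at hst
      have := ih hp.1 (by simpa using hs) (by simpa using ht) hst
      omega

lemma getVert_one_append {a b c : V} (P : H.Walk a b) (Q : H.Walk b c) (h : P.length ≠ 0) :
    (P.append Q).getVert 1 = P.getVert 1 := by
  rw [Walk.getVert_append]
  split_ifs with h1
  · rfl
  · have h1' : P.length = 1 := by omega
    rw [h1', Nat.sub_self, Walk.getVert_zero, ← h1', Walk.getVert_length]

lemma exists_dart_head {u v : V} (w : H.Walk u v) (hw : w.length ≠ 0) :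
    ∃ d ∈ w.darts, d.toProd = (u, w.getVert 1) := by
  cases w with
  | nil => simp at hw
  | cons h q =>
    exact ⟨⟨(_, _), h⟩, List.mem_cons_self,
      by simp [Walk.getVert_cons_succ, Walk.getVert_zero]⟩

lemma exists_dart_last {u v : V} (w : H.Walk u v) (hw : w.length ≠ 0) :
    ∃ d ∈ w.darts, d.toProd = (w.reverse.getVert 1, v) := by
  obtain ⟨d, hd, hd2⟩ := exists_dart_head w.reverse (by rwa [Walk.length_reverse])
  rw [Walk.darts_reverse, List.mem_reverse, List.mem_map] at hd
  obtain ⟨d', hd', rfl⟩ := hd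
  refine ⟨d', hd', ?_⟩
  have : d'.symm.toProd = d'.toProd.swap := rfl
  rw [this] at hd2
  have := congrArg Prod.swap hd2
  simpa using this

lemma edge_getVert' {u v x y : V} (w : H.Walk u v) (he : s(x, y) ∈ w.edges) :
    ∃ t, t + 1 ≤ w.length ∧
      ((w.getVert t = x ∧ w.getVert (t+1) = y) ∨ (w.getVert t = y ∧ w.getVert (t+1) = x)) := by
  induction w with
  | nil => simp at he
  | @cons a b c h q ih =>
    rw [Walk.edges_cons, List.mem_cons] at he
    rcases he with he | he
    · refine ⟨0, by simp, ?_⟩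
      rw [Sym2.eq_iff] at he
      simp only [Walk.getVert_zero, Walk.getVert_cons_succ]
      tauto
    · obtain ⟨t, ht, hor⟩ := ih he
      exact ⟨t + 1, by simp; omega, by simpa only [Walk.getVert_cons_succ] using hor⟩

lemma colorable_of_triangles_even (b : Fin 4 → V)
    (W : ∀ i j : Fin 4, i ≠ j → H.Walk (b i) (b j))
    (hpath : ∀ i j h, (W i j h).IsPath)
    (hbranch : ∀ i j h m, b m ∈ (W i j h).support → m = i ∨ m = j)
    (hdisj : ∀ i j h i' j' h', ¬(i = i' ∧ j = j') → ¬(i = j' ∧ j = i') →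
        ∀ v, v ∈ (W i j h).support → v ∈ (W i' j' h').support → ∃ m, v = b m)
    (hrev : ∀ i j h, W j i (Ne.symm h) = (W i j h).reverse)
    (hcover : ∀ v, ∃ i j h, v ∈ (W i j h).support)
    (hedge : ∀ e ∈ H.edgeSet, ∃ i j h, e ∈ (W i j h).edges)
    (heven : ∀ (i j k : Fin 4) (hij : i ≠ j) (hjk : j ≠ k) (hik : i ≠ k),
        Even ((W i j hij).length + (W j k hjk).length + (W i k hik).length)) :
    H.Colorable 2 := by
  classical
  -- the edge-parity function
  set x : ∀ i j : Fin 4, i ≠ j → ZMod 2 := fun i j h => ((W i j h).length : ZMod 2) with hx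
  have hcast : ∀ n : ℕ, Even n → (n : ZMod 2) = 0 := by
    intro n hn
    obtain ⟨m, rfl⟩ := hn
    push_cast
    have h2 : (2 : ZMod 2) = 0 := rfl
    linear_combination (m : ZMod 2) * h2
  have hxsymm : ∀ i j (h : i ≠ j), x j i h.symm = x i j h := by
    intro i j h
    simp only [hx, hrev i j h, Walk.length_reverse]
  have htri : ∀ (i j k : Fin 4) (hij : i ≠ j) (hjk : j ≠ k) (hik : i ≠ k),
      x i j hij + x j k hjk + x i k hik = 0 := by
    intro i j k hij hjk hik
    have := hcast _ (heven i j k hij hjk hik)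
    push_cast at this
    linear_combination this
  -- vertex potential on branch vertices
  set y : Fin 4 → ZMod 2 := fun i => if h : (0 : Fin 4) = i then 0 else x 0 i h with hy
  have hkey : ∀ a c s : ZMod 2, a + c + s = 0 → c = a + s := by decide
  have hy0 : y 0 = 0 := dif_pos rfl
  have hyi : ∀ i (h : (0 : Fin 4) ≠ i), y i = x 0 i h := fun i h => dif_neg h
  have hxy : ∀ i j (h : i ≠ j), x i j h = y i + y j := by
    intro i j h
    by_cases hi : (0 : Fin 4) = i
    · subst hi
      rw [hy0, hyi j h, zero_add]
    · by_cases hj : (0 : Fin 4) = j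
      · subst hj
        rw [hy0, hyi i hi, add_zero]
        exact hxsymm 0 i hi
      · rw [hyi i hi, hyi j hj]
        exact hkey _ _ _ (htri 0 i j hi h hj)
  -- the coloring relation
  set R : V → ZMod 2 → Prop := fun v c =>
    ∃ i j h t, t ≤ (W i j h).length ∧ (W i j h).getVert t = v ∧ c = y i + (t : ZMod 2)
    with hR
  have hbpos : ∀ (i j : Fin 4) (h : i ≠ j) (t : ℕ) (m : Fin 4), t ≤ (W i j h).length →
      (W i j h).getVert t = b m → y i + (t : ZMod 2) = y m := by
    intro i j h t m ht hbm
    have hmem : b m ∈ (W i j h).support :=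
      Walk.mem_support_iff_exists_getVert.mpr ⟨t, hbm, ht⟩
    rcases hbranch i j h m hmem with hm | hm
    · have ht0 : t = 0 := getVert_injOn' (hpath i j h) ht (Nat.zero_le _)
        (by rw [hbm, hm, Walk.getVert_zero])
      rw [ht0, hm]
      simp
    · have htl : t = (W i j h).length := getVert_injOn' (hpath i j h) ht le_rfl
        (by rw [hbm, hm, Walk.getVert_length])
      rw [htl, hm, show ((W i j h).length : ZMod 2) = x i j h from rfl, hxy i j h]
      have : ∀ a c : ZMod 2, a + (a + c) = c := by decide
      exact this _ _
  have hfun : ∀ v c c', R v c → R v c' → c = c' := by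
    rintro v c c' ⟨i, j, h, t, ht, hv, rfl⟩ ⟨i', j', h', t', ht', hv', rfl⟩
    by_cases hbm : ∃ m, v = b m
    · obtain ⟨m, rfl⟩ := hbm
      rw [hbpos i j h t m ht hv, hbpos i' j' h' t' m ht' hv']
    · have hpair : (i = i' ∧ j = j') ∨ (i = j' ∧ j = i') := by
        by_contra hcon
        push_neg at hcon
        exact hbm (hdisj i j h i' j' h' (fun hh => (hcon.1 hh.1) hh.2)
          (fun hh => (hcon.2 hh.1) hh.2) v
          (Walk.mem_support_iff_exists_getVert.mpr ⟨t, hv, ht⟩)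
          (Walk.mem_support_iff_exists_getVert.mpr ⟨t', hv', ht'⟩))
      rcases hpair with ⟨rfl, rfl⟩ | ⟨rfl, rfl⟩
      · have : t = t' := getVert_injOn' (hpath i j h) ht ht' (by rw [hv, hv'])
        rw [this]
      · -- second walk is the reverse of the first
        rw [hrev i j h] at hv' ht'
        rw [Walk.length_reverse] at ht'
        rw [Walk.getVert_reverse] at hv'
        have hts : t = (W i j h).length - t' :=
          getVert_injOn' (hpath i j h) ht (Nat.sub_le _ _) (by rw [hv, hv'])
        subst hts
        rw [Nat.cast_sub ht', show ((W i j h).length : ZMod 2) = x i j h from rfl,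
          hxy i j h]
        have : ∀ a c s : ZMod 2, a + (a + c - s) = c + s := by decide
        exact this _ _ _
  have htot : ∀ v, ∃ c, R v c := by
    intro v
    obtain ⟨i, j, h, hv⟩ := hcover v
    obtain ⟨t, hvt, ht⟩ := Walk.mem_support_iff_exists_getVert.mp hv
    exact ⟨y i + (t : ZMod 2), i, j, h, t, ht, hvt, rfl⟩
  choose c hc using htot
  have hvalid : ∀ {u w : V}, H.Adj u w → c u ≠ c w := by
    intro u w hadj
    obtain ⟨i, j, h, he⟩ := hedge s(u, w) (H.mem_edgeSet.mpr hadj)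
    obtain ⟨t, ht, hor⟩ := edge_getVert' (W i j h) he
    have h1 : ∀ a : ZMod 2, a ≠ a + 1 := by decide
    rcases hor with ⟨hu, hw⟩ | ⟨hw, hu⟩
    · have hcu : c u = y i + (t : ZMod 2) :=
        hfun u _ _ (hc u) ⟨i, j, h, t, by omega, hu, rfl⟩
      have hcw : c w = y i + (t : ZMod 2) + 1 := by
        have := hfun w _ _ (hc w) ⟨i, j, h, t + 1, ht, hw, rfl⟩
        rw [this]; push_cast; ring
      rw [hcu, hcw]; exact h1 _
    · have hcw : c w = y i + (t : ZMod 2) :=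
        hfun w _ _ (hc w) ⟨i, j, h, t, by omega, hw, rfl⟩
      have hcu : c u = y i + (t : ZMod 2) + 1 := by
        have := hfun u _ _ (hc u) ⟨i, j, h, t + 1, ht, hu, rfl⟩
        rw [this]; push_cast; ring
      rw [hcu, hcw]; exact (h1 _).symm
  have hcol : H.Coloring (ZMod 2) := SimpleGraph.Coloring.mk c hvalid
  have := hcol.colorable
  simpa using this

lemma K4symmetrize (hsub : IsK4Subdivision H) :
    ∃ (b : Fin 4 → V) (W : ∀ i j : Fin 4, i ≠ j → H.Walk (b i) (b j)),
      Function.Injective b ∧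
      (∀ i j h, (W i j h).IsPath) ∧
      (∀ i j h m, b m ∈ (W i j h).support → m = i ∨ m = j) ∧
      (∀ i j h i' j' h', ¬(i = i' ∧ j = j') → ¬(i = j' ∧ j = i') →
          ∀ v, v ∈ (W i j h).support → v ∈ (W i' j' h').support → ∃ m, v = b m) ∧
      (∀ i j h, W j i (Ne.symm h) = (W i j h).reverse) ∧
      (∀ v, ∃ i j h, v ∈ (W i j h).support) ∧
      (∀ e ∈ H.edgeSet, ∃ i j h, e ∈ (W i j h).edges) := by
  obtain ⟨b, p, hinj, hpath, hbranch, hdisj, hcover, hedge⟩ := hsub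
  refine ⟨b, fun i j hij =>
    if hlt : i < j then p i j hlt else (p j i ((not_lt.mp hlt).lt_of_ne (Ne.symm hij))).reverse,
    hinj, ?_, ?_, ?_, ?_, ?_, ?_⟩
  · intro i j hij
    by_cases hlt : i < j
    · simp only [dif_pos hlt]; exact hpath i j hlt
    · simp only [dif_neg hlt]; exact (hpath _ _ _).reverse
  · intro i j hij m hm
    by_cases hlt : i < j
    · simp only [dif_pos hlt] at hm; exact hbranch i j hlt m hm
    · simp only [dif_neg hlt, Walk.support_reverse, List.mem_reverse] at hm
      exact (hbranch _ _ _ m hm).symm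
  · intro i j hij i' j' hij' h1 h2 v hv hv'
    by_cases hlt : i < j <;> by_cases hlt' : i' < j'
    · simp only [dif_pos hlt] at hv; simp only [dif_pos hlt'] at hv'
      exact hdisj i j hlt i' j' hlt'
        (fun hp => h1 ⟨congrArg Prod.fst hp, congrArg Prod.snd hp⟩) v hv hv'
    · simp only [dif_pos hlt] at hv
      simp only [dif_neg hlt', Walk.support_reverse, List.mem_reverse] at hv'
      exact hdisj i j hlt j' i' _
        (fun hp => h2 ⟨congrArg Prod.fst hp, congrArg Prod.snd hp⟩) v hv hv'
    · simp only [dif_neg hlt, Walk.support_reverse, List.mem_reverse] at hv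
      simp only [dif_pos hlt'] at hv'
      exact hdisj j i _ i' j' hlt'
        (fun hp => h2 ⟨(congrArg Prod.snd hp), (congrArg Prod.fst hp)⟩) v hv hv'
    · simp only [dif_neg hlt, Walk.support_reverse, List.mem_reverse] at hv
      simp only [dif_neg hlt', Walk.support_reverse, List.mem_reverse] at hv'
      exact hdisj j i _ j' i' _
        (fun hp => h1 ⟨(congrArg Prod.snd hp), (congrArg Prod.fst hp)⟩) v hv hv'
  · intro i j hij
    by_cases hlt : i < j
    · simp only [dif_neg (asymm hlt), dif_pos hlt]
    · simp only [dif_pos ((not_lt.mp hlt).lt_of_ne (Ne.symm hij)), dif_neg hlt, Walk.reverse_reverse]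
  · intro v
    obtain ⟨i, j, hlt, hv⟩ := hcover v
    exact ⟨i, j, ne_of_lt hlt, by simp only [dif_pos hlt]; exact hv⟩
  · intro e he
    obtain ⟨i, j, hlt, hee⟩ := hedge e he
    exact ⟨i, j, ne_of_lt hlt, by simp only [dif_pos hlt]; exact hee⟩

lemma build_cycle {b : Fin 4 → V}
    {W : ∀ i j : Fin 4, i ≠ j → H.Walk (b i) (b j)}
    (hinj : Function.Injective b)
    (hpath : ∀ i j h, (W i j h).IsPath)
    (hbranch : ∀ i j h m, b m ∈ (W i j h).support → m = i ∨ m = j)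
    (hdisj : ∀ i j h i' j' h', ¬(i = i' ∧ j = j') → ¬(i = j' ∧ j = i') →
        ∀ v, v ∈ (W i j h).support → v ∈ (W i' j' h').support → ∃ m, v = b m)
    {k a c : Fin 4} (hka : k ≠ a) (hkc : k ≠ c) (hac : a ≠ c)
    (M : H.Walk (b a) (b c)) (hM : M.IsPath)
    (hM1 : ∀ v, v ∈ M.support → v ∈ (W k a hka).support → v = b a)
    (hM2 : ∀ v, v ∈ M.support → v ∈ (W c k (Ne.symm hkc)).support → v = b c) :
    ((W k a hka).append (M.append (W c k (Ne.symm hkc)))).IsCycle := by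
  have hW0 : ∀ i j (h : i ≠ j), (W i j h).length ≠ 0 :=
    fun i j h h0 => h (hinj (Walk.eq_of_length_eq_zero h0))
  have hM0 : M.length ≠ 0 := fun h0 => hac (hinj (Walk.eq_of_length_eq_zero h0))
  have hPQ : ∀ v, v ∈ (W k a hka).support → v ∈ (W c k (Ne.symm hkc)).support → v = b k := by
    intro v hv hv'
    obtain ⟨m, rfl⟩ := hdisj k a hka c k (Ne.symm hkc)
      (fun hp => hkc hp.1) (fun hp => hac hp.2) v hv hv'
    rcases hbranch k a hka m hv with h1 | h1
    · rw [h1]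
    · rcases hbranch c k (Ne.symm hkc) m hv' with h2 | h2
      · exact absurd (h1 ▸ h2 : a = c) hac
      · rw [h2]
  have hQpath : (M.append (W c k (Ne.symm hkc))).IsPath :=
    isPath_append' hM (hpath _ _ _) hM2
  apply isCycle_append' (fun he => hka (hinj he)) (hpath _ _ _) hQpath
  · rw [Walk.length_append]
    have := hM0; have := hW0 c k (Ne.symm hkc); omega
  · intro v hv hv'
    rw [Walk.mem_support_append_iff] at hv'
    rcases hv' with hv' | hv'
    · exact Or.inr (hM1 v hv' hv)
    · exact Or.inl (hPQ v hv hv')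

end Aux


/-- If `H` is a non-bipartite subdivision of `K₄`, then every orientation of `H`
contains an inconsistent odd cycle: a cycle of odd length in the underlying graph whose
edges do not all point consistently around the cycle (in either traversal direction),
so it is not a directed cycle. -/
theorem stmt10 (V : Type) [Fintype V] (H : SimpleGraph V)
    (hsub : IsK4Subdivision H) (hnb : ¬ H.Colorable 2)
    (E : V → V → Prop) (hor : IsOrientation H E) :
    ∃ (v : V) (w : H.Walk v v), w.IsCycle ∧ Odd w.length ∧
      ¬ (∀ d ∈ w.darts, E d.toProd.1 d.toProd.2) ∧
      ¬ (∀ d ∈ w.darts, E d.toProd.2 d.toProd.1) := by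
  classical
  by_contra hcon
  push_neg at hcon
  obtain ⟨b, W, hinj, hpath, hbranch, hdisj, hrev, hcover, hedge⟩ := K4symmetrize hsub
  have hW0 : ∀ i j (h : i ≠ j), (W i j h).length ≠ 0 :=
    fun i j h h0 => h (hinj (Walk.eq_of_length_eq_zero h0))
  -- length function
  set L : Fin 4 → Fin 4 → ℕ := fun i j => if h : i = j then 0 else (W i j h).length with hLdef
  have hL : ∀ i j (h : i ≠ j), L i j = (W i j h).length := fun i j h => dif_neg h
  have hLsymm : ∀ i j, L i j = L j i := by
    intro i j
    rcases eq_or_ne i j with rfl | h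
    · rfl
    · rw [hL i j h, hL j i (Ne.symm h), hrev i j h, Walk.length_reverse]
  -- Boolean parity vector
  set xv : Fin 6 → Bool := fun n =>
    if n = 0 then decide (Odd (L 0 1)) else if n = 1 then decide (Odd (L 0 2))
    else if n = 2 then decide (Odd (L 0 3)) else if n = 3 then decide (Odd (L 1 2))
    else if n = 4 then decide (Odd (L 1 3)) else decide (Odd (L 2 3)) with hxv
  have hxe : ∀ i j : Fin 4, i ≠ j → xv (eidx i j) = decide (Odd (L i j)) := by
    intro i j hij
    fin_cases i <;> fin_cases j <;>
      first
        | exact absurd rfl hij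
        | rfl
        | (show xv _ = _; rw [hLsymm]; rfl)
  have htri3 : ∀ (i j k : Fin 4), i ≠ j → j ≠ k → i ≠ k →
      (triB xv i j k = true ↔ Odd (L i j + L j k + L i k)) := by
    intro i j k hij hjk hik
    rw [triB, hxe i j hij, hxe j k hjk, hxe k i (Ne.symm hik), hLsymm k i, xor2, xor2,
      decide_eq_true_iff, Nat.add_assoc (L i j) (L j k) (L i k)]
  by_cases hodd : ∃ i j k : Fin 4, i ≠ j ∧ j ≠ k ∧ i ≠ k ∧ triB xv i j k = true
  swap
  · -- all triangles even: H is bipartite, contradiction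
    push_neg at hodd
    refine absurd (colorable_of_triangles_even b W hpath hbranch hdisj hrev hcover hedge ?_) hnb
    intro i j k hij hjk hik
    have h1 := hodd i j k hij hjk hik
    have h2 : ¬ Odd (L i j + L j k + L i k) := fun ho => h1 ((htri3 i j k hij hjk hik).mpr ho)
    rw [Nat.not_odd_iff_even] at h2
    rwa [hL i j hij, hL j k hjk, hL i k hik] at h2
  -- there is an odd triangle: select the configuration
  obtain ⟨k, i, j, l, hki, hkj, hkl, hij, hil, hjl, hc1, hc2, hc3⟩ := selectB xv hodd
  -- the generic inconsistency of directed odd cycles through b k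
  have pairNE : ∀ (w : H.Walk (b k) (b k)), w.IsCycle → Odd w.length →
      ¬ (E (w.getVert 1) (b k) ↔ E (w.reverse.getVert 1) (b k)) := by
    intro w hcyc hoddw hiff
    have hlen0 : w.length ≠ 0 := by
      intro h0; rw [h0] at hoddw; simp at hoddw
    obtain ⟨d1, hd1, he1⟩ := exists_dart_head w hlen0
    obtain ⟨d2, hd2, he2⟩ := exists_dart_last w hlen0
    rcases em (∀ d ∈ w.darts, E d.toProd.1 d.toProd.2) with hf | hnf
    · have h1 := hf d1 hd1
      rw [he1] at h1
      have h2 := hf d2 hd2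
      rw [he2] at h2
      exact hor.2 (b k) (w.getVert 1) ⟨h1, hiff.mpr h2⟩
    · push_neg at hnf
      have hbk := hcon (b k) w hcyc hoddw hnf
      have h1 := hbk d1 hd1
      rw [he1] at h1
      have h2 := hbk d2 hd2
      rw [he2] at h2
      exact hor.2 (b k) (w.reverse.getVert 1) ⟨h2, hiff.mp h1⟩
  -- intersection helper
  have hinter : ∀ (i j i' j' : Fin 4) (h : i ≠ j) (h' : i' ≠ j'),
      ¬(i = i' ∧ j = j') → ¬(i = j' ∧ j = i') →
      ∀ v, v ∈ (W i j h).support → v ∈ (W i' j' h').support →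
        ∃ m, v = b m ∧ (m = i ∨ m = j) ∧ (m = i' ∨ m = j') := by
    intro i j i' j' h h' h1 h2 v hv hv'
    obtain ⟨m, rfl⟩ := hdisj i j h i' j' h' h1 h2 v hv hv'
    exact ⟨m, rfl, hbranch i j h m hv, hbranch i' j' h' m hv'⟩
  -- the key step: each admissible pair has different in/out status at b k
  have key : ∀ (a c m : Fin 4) (hka : k ≠ a) (hkc : k ≠ c) (hac : a ≠ c)
      (ham : a ≠ m) (hcm : c ≠ m) (hkm : k ≠ m),
      (triB xv k a c = true ∨ quadB xv k a m c = true) →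
      ¬ (E ((W k a hka).getVert 1) (b k) ↔ E ((W k c hkc).getVert 1) (b k)) := by
    intro a c m hka hkc hac ham hcm hkm hcond
    obtain ⟨M, hMpath, hModd, hM1, hM2⟩ :
        ∃ M : H.Walk (b a) (b c), M.IsPath ∧ Odd (L k a + M.length + L c k) ∧
          (∀ v, v ∈ M.support → v ∈ (W k a hka).support → v = b a) ∧
          (∀ v, v ∈ M.support → v ∈ (W c k (Ne.symm hkc)).support → v = b c) := by
      rcases hcond with hcond | hcond
      · -- triangle
        refine ⟨W a c hac, hpath _ _ _, ?_, ?_, ?_⟩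
        · have : Odd (L k a + L a c + L c k) := by
            have h3 := (htri3 k a c hka hac (by exact fun h => hkc h)).mp hcond
            have heq : L k a + L a c + L k c = L k a + L a c + L c k := by
              rw [hLsymm k c]
            rwa [heq] at h3
          rwa [hL a c hac] at this
        · intro v hv hv'
          obtain ⟨m', rfl, hA, hB⟩ := hinter a c k a hac hka
            (fun hp => hka hp.1.symm) (fun hp => hkc hp.2.symm) v hv hv'
          rcases hA with h1 | h1
          · rw [h1]
          · rcases hB with h2 | h2
            · exact absurd (h1 ▸ h2 : c = k) (Ne.symm hkc)
            · exact absurd (h1 ▸ h2 : c = a) (Ne.symm hac)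
        · intro v hv hv'
          obtain ⟨m', rfl, hA, hB⟩ := hinter a c c k hac (Ne.symm hkc)
            (fun hp => hac hp.1) (fun hp => hka hp.1.symm) v hv hv'
          rcases hA with h1 | h1
          · rcases hB with h2 | h2
            · exact absurd (h1 ▸ h2 : a = c) hac
            · exact absurd (h1 ▸ h2 : a = k) (Ne.symm hka)
          · rw [h1]
      · -- quadrilateral, via middle branch vertex m
        refine ⟨(W a m ham).append (W m c (Ne.symm hcm)), ?_, ?_, ?_, ?_⟩
        · refine isPath_append' (hpath _ _ _) (hpath _ _ _) ?_
          intro v hv hv'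
          obtain ⟨m', rfl, hA, hB⟩ := hinter a m m c ham (Ne.symm hcm)
            (fun hp => ham hp.1) (fun hp => hac hp.1) v hv hv'
          rcases hA with h1 | h1
          · rcases hB with h2 | h2
            · exact absurd (h1 ▸ h2 : a = m) ham
            · exact absurd (h1 ▸ h2 : a = c) hac
          · rw [h1]
        · rw [Walk.length_append]
          have h4 : Odd (L k a + L a m + L m c + L c k) := by
            rw [quadB, hxe k a hka, hxe a m ham, hxe m c (Ne.symm hcm),
              hxe c k (Ne.symm hkc), xor2, xor2, xor2, decide_eq_true_iff] at hcond
            have heq : L k a + (L a m + (L m c + L c k)) = L k a + L a m + L m c + L c k := by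
              omega
            rwa [heq] at hcond
          have heq2 : L k a + ((W a m ham).length + (W m c (Ne.symm hcm)).length) + L c k
              = L k a + L a m + L m c + L c k := by
            rw [hL a m ham, hL m c (Ne.symm hcm)]
            omega
          rwa [heq2]
        · intro v hv hv'
          rw [Walk.mem_support_append_iff] at hv
          rcases hv with hv | hv
          · obtain ⟨m', rfl, hA, hB⟩ := hinter a m k a ham hka
              (fun hp => hka hp.1.symm) (fun hp => hkm hp.2.symm) v hv hv'
            rcases hA with h1 | h1
            · rw [h1]
            · rcases hB with h2 | h2
              · exact absurd (h1 ▸ h2 : m = k) (Ne.symm hkm)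
              · exact absurd (h1 ▸ h2 : m = a) (Ne.symm ham)
          · obtain ⟨m', rfl, hA, hB⟩ := hinter m c k a (Ne.symm hcm) hka
              (fun hp => hkm hp.1.symm) (fun hp => ham hp.1.symm) v hv hv'
            rcases hA with h1 | h1
            · rcases hB with h2 | h2
              · exact absurd (h1 ▸ h2 : m = k) (Ne.symm hkm)
              · exact absurd (h1 ▸ h2 : m = a) (Ne.symm ham)
            · rcases hB with h2 | h2
              · exact absurd (h1 ▸ h2 : c = k) (Ne.symm hkc)
              · exact absurd (h1 ▸ h2 : c = a) (Ne.symm hac)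
        · intro v hv hv'
          rw [Walk.mem_support_append_iff] at hv
          rcases hv with hv | hv
          · obtain ⟨m', rfl, hA, hB⟩ := hinter a m c k ham (Ne.symm hkc)
              (fun hp => hac hp.1) (fun hp => hka hp.1.symm) v hv hv'
            rcases hA with h1 | h1
            · rcases hB with h2 | h2
              · exact absurd (h1 ▸ h2 : a = c) hac
              · exact absurd (h1 ▸ h2 : a = k) (Ne.symm hka)
            · rcases hB with h2 | h2
              · exact absurd (h1 ▸ h2 : m = c) (Ne.symm hcm)
              · exact absurd (h1 ▸ h2 : m = k) (Ne.symm hkm)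
          · obtain ⟨m', rfl, hA, hB⟩ := hinter m c c k (Ne.symm hcm) (Ne.symm hkc)
              (fun hp => hcm hp.1.symm) (fun hp => hkm hp.1.symm) v hv hv'
            rcases hA with h1 | h1
            · rcases hB with h2 | h2
              · exact absurd (h1 ▸ h2 : m = c) (Ne.symm hcm)
              · exact absurd (h1 ▸ h2 : m = k) (Ne.symm hkm)
            · rw [h1]
    -- now build the cycle
    set w : H.Walk (b k) (b k) :=
      (W k a hka).append (M.append (W c k (Ne.symm hkc))) with hwdef
    have hcyc : w.IsCycle :=
      build_cycle hinj hpath hbranch hdisj hka hkc hac M hMpath hM1 hM2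
    have hwlen : Odd w.length := by
      have hlen : w.length = L k a + M.length + L c k := by
        rw [hwdef, Walk.length_append, Walk.length_append,
          ← hL k a hka, ← hL c k (Ne.symm hkc)]
        omega
      rwa [hlen]
    have hg1 : w.getVert 1 = (W k a hka).getVert 1 :=
      getVert_one_append _ _ (hW0 k a hka)
    have hg2 : w.reverse.getVert 1 = (W k c hkc).getVert 1 := by
      have hrw : w.reverse
          = ((W c k (Ne.symm hkc)).reverse.append M.reverse).append (W k a hka).reverse := by
        rw [hwdef, Walk.reverse_append, Walk.reverse_append]
      rw [hrw, getVert_one_append, getVert_one_append]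
      · rw [← hrev c k (Ne.symm hkc)]
      · rw [Walk.length_reverse]; exact hW0 c k (Ne.symm hkc)
      · rw [Walk.length_append, Walk.length_reverse]
        have := hW0 c k (Ne.symm hkc); omega
    have := pairNE w hcyc hwlen
    rw [hg1, hg2] at this
    exact this
  have k1 := key i j l hki hkj hij hil hjl hkl hc1
  have k2 := key j l i hkj hkl hjl (Ne.symm hij) (Ne.symm hil) hki hc2
  have k3 := key l i j hkl hki (Ne.symm hil) (Ne.symm hjl) hij hkj hc3
  tauto
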